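/- With P = [[1+t, 1+t, 0],[0, 1+t, 0],[0, 1+t, 1+t]], one has P^{-1} L_1(s,t) P = BKL_1(s, t^{-1}) and P^{-1} L_2(s,t) P = BKL_2(s, t^{-1}); equivalently, L_1(s,t)·P = P·BKL_1(s,t^{-1}) and L_2(s,t)·P = P·BKL_2(s,t^{-1}) over Z[s^{±1}, t^{±1}]. -/
import Mathlib


/-- The ring `ℤ[s^{±1}, t^{±1}]`. -/
abbrev RST : Type := AddMonoidAlgebra ℤ (Fin 2 →₀ ℤ)

noncomputable def s : RST := AddMonoidAlgebra.single (Finsupp.single 0 1) 1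
noncomputable def t : RST := AddMonoidAlgebra.single (Finsupp.single 1 1) 1
noncomputable def ti : RST := AddMonoidAlgebra.single (Finsupp.single 1 (-1)) 1

noncomputable def L1 : Matrix (Fin 3) (Fin 3) RST :=
  !![s ^ 2 * ti, -(s ^ 2 * (1 + ti)), s ^ 2; 0, -s, s; 0, 0, 1]

noncomputable def L2 : Matrix (Fin 3) (Fin 3) RST :=
  !![1, 0, 0; 1, -s, 0; 1, -(s * (1 + ti)), s ^ 2 * ti]

noncomputable def BKL1 (q u : RST) : Matrix (Fin 3) (Fin 3) RST :=
  !![q ^ 2 * u, 0, q ^ 2 - q; 0, 0, q; 0, 1, 1 - q]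

noncomputable def BKL2 (q u : RST) : Matrix (Fin 3) (Fin 3) RST :=
  !![0, q, 0; 1, 1 - q, 0; 0, u * (q ^ 2 - q), q ^ 2 * u]

noncomputable def P : Matrix (Fin 3) (Fin 3) RST :=
  !![1 + t, 1 + t, 0; 0, 1 + t, 0; 0, 1 + t, 1 + t]

theorem stmt15 : L1 * P = P * BKL1 s ti ∧ L2 * P = P * BKL2 s ti := by
  constructor <;>
  · refine Matrix.ext fun i j => ?_
    fin_cases i <;> fin_cases j <;>
      simp [L1, L2, P, BKL1, BKL2, Matrix.mul_apply, Fin.sum_univ_three,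
        Matrix.vecHead, Matrix.vecTail] <;> ring
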